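/- The N×N matrix M built from variables u_j, v̄_j (j ∈ ℤ/Nℤ) as follows has determinant zero: for rows 0 ≤ i ≤ N−3, M has entries M_{i,i} = −u_i v̄_i p_{i+1}, M_{i,i+1} = q_i, M_{i,i+2} = −p_i, zero elsewhere; row N−2 has M_{N−2,0} = −p_{N−2}V, M_{N−2,N−2} = −u_{N−2}v̄_{N−2}p_{N−1}, M_{N−2,N−1} = q_{N−2}; row N−1 has M_{N−1,0} = q_{N−1}V, M_{N−1,1} = −p_{N−1}V, M_{N−1,N−1} = −u_{N−1}v̄_{N−1}p_0; here p_j = u_j v̄_j − 1, q_j = p_j u_{j+1} + v̄_j p_{j+1} (indices mod N) and V = ∏_{k=0}^{N−1} v̄_k. -/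

import Mathlib

open Matrix Finset

/-- `p_j = u_j v̄_j − 1`, indices in `ℤ/Nℤ`. -/
def pBKP {N : ℕ} (u vb : ZMod N → ℂ) (j : ZMod N) : ℂ := u j * vb j - 1

/-- `q_j = p_j u_{j+1} + v̄_j p_{j+1}`, indices in `ℤ/Nℤ`. -/
def qBKP {N : ℕ} (u vb : ZMod N → ℂ) (j : ZMod N) : ℂ :=
  pBKP u vb j * u (j + 1) + vb j * pBKP u vb (j + 1)

/-- `V = ∏_{k=0}^{N−1} v̄_k`. -/
def VBKP {N : ℕ} (vb : ZMod N → ℂ) : ℂ := ∏ k ∈ Finset.range N, vb (k : ZMod N)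

/-- The matrix `M` of the linear system for the Yang–Baxter map of
the `N`-reduced discrete BKP equation. -/
noncomputable def MBKP (N : ℕ) (u vb : ZMod N → ℂ) : Matrix (Fin N) (Fin N) ℂ :=
  Matrix.of fun i j =>
    let i' : ZMod N := ((i : ℕ) : ZMod N)
    if (i : ℕ) ≤ N - 3 then
      (if (j : ℕ) = (i : ℕ) then -(u i' * vb i' * pBKP u vb (i' + 1))
       else if (j : ℕ) = (i : ℕ) + 1 then qBKP u vb i'
       else if (j : ℕ) = (i : ℕ) + 2 then -pBKP u vb i'
       else 0)
    else if (i : ℕ) = N - 2 then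
      (if (j : ℕ) = 0 then -pBKP u vb i' * VBKP vb
       else if (j : ℕ) = N - 2 then -(u i' * vb i' * pBKP u vb (i' + 1))
       else if (j : ℕ) = N - 1 then qBKP u vb i'
       else 0)
    else
      (if (j : ℕ) = 0 then qBKP u vb i' * VBKP vb
       else if (j : ℕ) = 1 then -pBKP u vb i' * VBKP vb
       else if (j : ℕ) = N - 1 then -(u i' * vb i' * pBKP u vb (i' + 1))
       else 0)

/-- The left-kernel vector. -/
noncomputable def yBKP (N : ℕ) (u vb : ZMod N → ℂ) (i : ℕ) : ℂ :=
  (∏ j ∈ ((Finset.range N).erase i).erase ((i + 1) % N), pBKP u vb (j : ZMod N)) *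
  (∏ j ∈ Finset.Ico (i + 1) N, vb (j : ZMod N))

lemma relA {N : ℕ} (hN : 3 ≤ N) (u vb : ZMod N → ℂ) (i : ℕ) (h2 : i + 2 ≤ N) :
    pBKP u vb (i : ZMod N) * yBKP N u vb i =
      vb ((i + 1 : ℕ) : ZMod N) * pBKP u vb ((i + 2 : ℕ) : ZMod N) * yBKP N u vb (i + 1) := by
  have hi1 : i + 1 < N := by omega
  have hmod1 : (i + 1) % N = i + 1 := Nat.mod_eq_of_lt hi1
  have hmod2 : (i + 1 + 1) % N = (i + 2) % N := by
    have h : i + 1 + 1 = i + 2 := by omega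
    rw [h]
  have hcast : ((i + 2 : ℕ) : ZMod N) = (((i + 2) % N : ℕ) : ZMod N) := (ZMod.natCast_mod _ _).symm
  unfold yBKP
  rw [hmod1, hmod2, hcast]
  have hmemL : i ∈ (Finset.range N).erase (i + 1) := by
    simp only [Finset.mem_erase, Finset.mem_range]; omega
  have hmemR : (i + 2) % N ∈ (Finset.range N).erase (i + 1) := by
    simp only [Finset.mem_erase, Finset.mem_range]
    constructor
    · rcases Nat.lt_or_ge (i + 2) N with h | h
      · rw [Nat.mod_eq_of_lt h]; omega
      · have h' : i + 2 = N := by omega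
        rw [h', Nat.mod_self]; omega
    · exact Nat.mod_lt _ (by omega)
  have hLP : pBKP u vb (i : ZMod N) *
      ∏ j ∈ ((Finset.range N).erase i).erase (i + 1), pBKP u vb (j : ZMod N) =
      ∏ j ∈ (Finset.range N).erase (i + 1), pBKP u vb (j : ZMod N) := by
    rw [Finset.erase_right_comm]
    exact Finset.mul_prod_erase _ (fun j : ℕ => pBKP u vb (j : ZMod N)) hmemL
  have hRP : pBKP u vb (((i + 2) % N : ℕ) : ZMod N) *
      ∏ j ∈ ((Finset.range N).erase (i + 1)).erase ((i + 2) % N), pBKP u vb (j : ZMod N) =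
      ∏ j ∈ (Finset.range N).erase (i + 1), pBKP u vb (j : ZMod N) :=
    Finset.mul_prod_erase _ (fun j : ℕ => pBKP u vb (j : ZMod N)) hmemR
  have hV : vb ((i + 1 : ℕ) : ZMod N) * ∏ j ∈ Finset.Ico (i + 1 + 1) N, vb (j : ZMod N) =
      ∏ j ∈ Finset.Ico (i + 1) N, vb (j : ZMod N) := by
    rw [← Finset.mul_prod_erase (Finset.Ico (i + 1) N) _
      (Finset.mem_Ico.mpr ⟨le_refl _, hi1⟩), Finset.Ico_erase_left, ← Finset.Ico_add_one_left_eq_Ioo]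
  calc pBKP u vb (i : ZMod N) *
        ((∏ j ∈ ((Finset.range N).erase i).erase (i + 1), pBKP u vb (j : ZMod N)) *
          ∏ j ∈ Finset.Ico (i + 1) N, vb (j : ZMod N))
      = (pBKP u vb (i : ZMod N) *
          ∏ j ∈ ((Finset.range N).erase i).erase (i + 1), pBKP u vb (j : ZMod N)) *
          ∏ j ∈ Finset.Ico (i + 1) N, vb (j : ZMod N) := by ring
    _ = (∏ j ∈ (Finset.range N).erase (i + 1), pBKP u vb (j : ZMod N)) *
          ∏ j ∈ Finset.Ico (i + 1) N, vb (j : ZMod N) := by rw [hLP]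
    _ = (pBKP u vb (((i + 2) % N : ℕ) : ZMod N) *
          ∏ j ∈ ((Finset.range N).erase (i + 1)).erase ((i + 2) % N), pBKP u vb (j : ZMod N)) *
          (vb ((i + 1 : ℕ) : ZMod N) *
            ∏ j ∈ Finset.Ico (i + 1 + 1) N, vb (j : ZMod N)) := by rw [hRP, hV]
    _ = _ := by ring

lemma relB {N : ℕ} (hN : 3 ≤ N) (u vb : ZMod N → ℂ) :
    vb ((0 : ℕ) : ZMod N) * pBKP u vb ((1 : ℕ) : ZMod N) * yBKP N u vb 0 =
      pBKP u vb ((N - 1 : ℕ) : ZMod N) * VBKP vb * yBKP N u vb (N - 1) := by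
  unfold yBKP
  have h1 : (0 + 1) % N = 1 := Nat.mod_eq_of_lt (by omega)
  have h2 : (N - 1 + 1) % N = 0 := by
    have h : N - 1 + 1 = N := by omega
    rw [h, Nat.mod_self]
  rw [h1, h2]
  have hmemL : (1 : ℕ) ∈ (Finset.range N).erase 0 := by
    simp only [Finset.mem_erase, Finset.mem_range]; omega
  have hmemR : N - 1 ∈ (Finset.range N).erase 0 := by
    simp only [Finset.mem_erase, Finset.mem_range]; omega
  have hLP : pBKP u vb ((1 : ℕ) : ZMod N) *
      ∏ j ∈ ((Finset.range N).erase 0).erase 1, pBKP u vb (j : ZMod N) =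
      ∏ j ∈ (Finset.range N).erase 0, pBKP u vb (j : ZMod N) :=
    Finset.mul_prod_erase _ (fun j : ℕ => pBKP u vb (j : ZMod N)) hmemL
  have hRP : pBKP u vb ((N - 1 : ℕ) : ZMod N) *
      ∏ j ∈ ((Finset.range N).erase (N - 1)).erase 0, pBKP u vb (j : ZMod N) =
      ∏ j ∈ (Finset.range N).erase 0, pBKP u vb (j : ZMod N) := by
    rw [Finset.erase_right_comm]
    exact Finset.mul_prod_erase _ (fun j : ℕ => pBKP u vb (j : ZMod N)) hmemR
  have hV : vb ((0 : ℕ) : ZMod N) * ∏ j ∈ Finset.Ico (0 + 1) N, vb (j : ZMod N) =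
      VBKP vb := by
    unfold VBKP
    rw [Finset.range_eq_Ico,
      ← Finset.mul_prod_erase (Finset.Ico 0 N) _ (Finset.mem_Ico.mpr ⟨le_refl _, by omega⟩),
      Finset.Ico_erase_left, ← Finset.Ico_add_one_left_eq_Ioo]
  have hIco : Finset.Ico (N - 1 + 1) N = ∅ := Finset.Ico_eq_empty (by omega)
  rw [hIco]
  calc vb ((0 : ℕ) : ZMod N) * pBKP u vb ((1 : ℕ) : ZMod N) *
        ((∏ j ∈ ((Finset.range N).erase 0).erase 1, pBKP u vb (j : ZMod N)) *
          ∏ j ∈ Finset.Ico (0 + 1) N, vb (j : ZMod N))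
      = (pBKP u vb ((1 : ℕ) : ZMod N) *
          ∏ j ∈ ((Finset.range N).erase 0).erase 1, pBKP u vb (j : ZMod N)) *
        (vb ((0 : ℕ) : ZMod N) * ∏ j ∈ Finset.Ico (0 + 1) N, vb (j : ZMod N)) := by ring
    _ = (∏ j ∈ (Finset.range N).erase 0, pBKP u vb (j : ZMod N)) * VBKP vb := by rw [hLP, hV]
    _ = (pBKP u vb ((N - 1 : ℕ) : ZMod N) *
          ∏ j ∈ ((Finset.range N).erase (N - 1)).erase 0, pBKP u vb (j : ZMod N)) *
        VBKP vb := by rw [hRP]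
    _ = _ := by rw [Finset.prod_empty]; ring


section Entries

variable {N : ℕ} (u vb : ZMod N → ℂ)

lemma MBKP_diag (hN : 3 ≤ N) (i j : Fin N) (h : (i : ℕ) = (j : ℕ)) :
    MBKP N u vb i j =
      -(u ((i : ℕ) : ZMod N) * vb ((i : ℕ) : ZMod N) * pBKP u vb (((i : ℕ) : ZMod N) + 1)) := by
  have hi := i.isLt; have hj := j.isLt
  simp only [MBKP, Matrix.of_apply]
  split_ifs <;> first | rfl | (exfalso; omega)

lemma MBKP_sub1 (hN : 3 ≤ N) (i j : Fin N) (h : (i : ℕ) + 1 = (j : ℕ)) :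
    MBKP N u vb i j = qBKP u vb ((i : ℕ) : ZMod N) := by
  have hi := i.isLt; have hj := j.isLt
  simp only [MBKP, Matrix.of_apply]
  split_ifs <;> first | rfl | (exfalso; omega)

lemma MBKP_sub2 (hN : 3 ≤ N) (i j : Fin N) (h : (i : ℕ) + 2 = (j : ℕ)) :
    MBKP N u vb i j = -pBKP u vb ((i : ℕ) : ZMod N) := by
  have hi := i.isLt; have hj := j.isLt
  simp only [MBKP, Matrix.of_apply]
  split_ifs <;> first | rfl | (exfalso; omega)

lemma MBKP_rowlast2_col0 (hN : 3 ≤ N) (i j : Fin N) (hi : (i : ℕ) = N - 2)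
    (hj : (j : ℕ) = 0) :
    MBKP N u vb i j = -pBKP u vb ((i : ℕ) : ZMod N) * VBKP vb := by
  have hi' := i.isLt; have hj' := j.isLt
  simp only [MBKP, Matrix.of_apply]
  split_ifs <;> first | rfl | (exfalso; omega)

lemma MBKP_rowlast_col0 (hN : 3 ≤ N) (i j : Fin N) (hi : (i : ℕ) = N - 1)
    (hj : (j : ℕ) = 0) :
    MBKP N u vb i j = qBKP u vb ((i : ℕ) : ZMod N) * VBKP vb := by
  have hi' := i.isLt; have hj' := j.isLt
  simp only [MBKP, Matrix.of_apply]
  split_ifs <;> first | rfl | (exfalso; omega)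

lemma MBKP_rowlast_col1 (hN : 3 ≤ N) (i j : Fin N) (hi : (i : ℕ) = N - 1)
    (hj : (j : ℕ) = 1) :
    MBKP N u vb i j = -pBKP u vb ((i : ℕ) : ZMod N) * VBKP vb := by
  have hi' := i.isLt; have hj' := j.isLt
  simp only [MBKP, Matrix.of_apply]
  split_ifs <;> first | rfl | (exfalso; omega)

lemma MBKP_zero_col0 (hN : 3 ≤ N) (i j : Fin N) (hj : (j : ℕ) = 0) (h1 : (i : ℕ) ≠ 0)
    (h2 : (i : ℕ) ≠ N - 2) (h3 : (i : ℕ) ≠ N - 1) : MBKP N u vb i j = 0 := by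
  have hi' := i.isLt; have hj' := j.isLt
  simp only [MBKP, Matrix.of_apply]
  split_ifs <;> first | rfl | (exfalso; omega)

lemma MBKP_zero_col1 (hN : 3 ≤ N) (i j : Fin N) (hj : (j : ℕ) = 1) (h1 : (i : ℕ) ≠ 0)
    (h2 : (i : ℕ) ≠ 1) (h3 : (i : ℕ) ≠ N - 1) : MBKP N u vb i j = 0 := by
  have hi' := i.isLt; have hj' := j.isLt
  simp only [MBKP, Matrix.of_apply]
  split_ifs <;> first | rfl | (exfalso; omega)

lemma MBKP_zero_colgen (hN : 3 ≤ N) (i j : Fin N) (hj : 2 ≤ (j : ℕ))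
    (h1 : (i : ℕ) + 2 ≠ (j : ℕ)) (h2 : (i : ℕ) + 1 ≠ (j : ℕ)) (h3 : (i : ℕ) ≠ (j : ℕ)) :
    MBKP N u vb i j = 0 := by
  have hi' := i.isLt; have hj' := j.isLt
  simp only [MBKP, Matrix.of_apply]
  split_ifs <;> first | rfl | (exfalso; omega)

end Entries

lemma sum_yBKP_mul {N : ℕ} (hN : 3 ≤ N) (u vb : ZMod N → ℂ) (j : Fin N) :
    ∑ i : Fin N, yBKP N u vb (i : ℕ) * MBKP N u vb i j = 0 := by
  have hNpos : 0 < N := by omega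
  have hj' := j.isLt
  by_cases hj0 : (j : ℕ) = 0
  · -- column 0 : rows 0, N-2, N-1
    set a : Fin N := ⟨0, by omega⟩
    set b : Fin N := ⟨N - 2, by omega⟩
    set c : Fin N := ⟨N - 1, by omega⟩
    have hS : ∑ i : Fin N, yBKP N u vb (i : ℕ) * MBKP N u vb i j =
        ∑ i ∈ ({a, b, c} : Finset (Fin N)), yBKP N u vb (i : ℕ) * MBKP N u vb i j := by
      refine (Finset.sum_subset (Finset.subset_univ _) ?_).symm
      intro i _ hi
      simp only [Finset.mem_insert, Finset.mem_singleton, not_or, Fin.ext_iff, a, b, c] at hi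
      rw [MBKP_zero_col0 u vb hN i j hj0 hi.1 hi.2.1 hi.2.2, mul_zero]
    rw [hS, Finset.sum_insert (by simp [Fin.ext_iff, a, b, c]; omega),
      Finset.sum_insert (by simp [Fin.ext_iff, b, c]; omega), Finset.sum_singleton]
    rw [MBKP_diag u vb hN a j (by simp [a, hj0]),
      MBKP_rowlast2_col0 u vb hN b j (by simp [b]) hj0,
      MBKP_rowlast_col0 u vb hN c j (by simp [c]) hj0]
    simp only [a, b, c, Fin.val_mk]
    have hB := relB hN u vb
    have hA := relA hN u vb (N - 2) (by omega)
    rw [show N - 2 + 1 = N - 1 from by omega, show N - 2 + 2 = N from by omega,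
      ZMod.natCast_self] at hA
    have e1 : ((N - 1 : ℕ) : ZMod N) + 1 = 0 := by
      rw [show (1 : ZMod N) = ((1 : ℕ) : ZMod N) from by simp, ← Nat.cast_add,
        show N - 1 + 1 = N from by omega, ZMod.natCast_self]
    simp only [qBKP, e1]
    rw [show ((0 : ℕ) : ZMod N) = (0 : ZMod N) from by simp] at hB ⊢
    rw [show ((1 : ℕ) : ZMod N) = (1 : ZMod N) from by simp] at hB
    rw [show (0 : ZMod N) + 1 = 1 from by ring]
    linear_combination (-(u 0)) * hB - VBKP vb * hA
  · by_cases hj1 : (j : ℕ) = 1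
    · -- column 1 : rows 0, 1, N-1
      set a : Fin N := ⟨0, by omega⟩
      set b : Fin N := ⟨1, by omega⟩
      set c : Fin N := ⟨N - 1, by omega⟩
      have hS : ∑ i : Fin N, yBKP N u vb (i : ℕ) * MBKP N u vb i j =
          ∑ i ∈ ({a, b, c} : Finset (Fin N)), yBKP N u vb (i : ℕ) * MBKP N u vb i j := by
        refine (Finset.sum_subset (Finset.subset_univ _) ?_).symm
        intro i _ hi
        simp only [Finset.mem_insert, Finset.mem_singleton, not_or, Fin.ext_iff, a, b, c] at hi
        rw [MBKP_zero_col1 u vb hN i j hj1 hi.1 hi.2.1 hi.2.2, mul_zero]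
      rw [hS, Finset.sum_insert (by simp [Fin.ext_iff, a, b, c]; omega),
        Finset.sum_insert (by simp [Fin.ext_iff, b, c]; omega), Finset.sum_singleton]
      rw [MBKP_sub1 u vb hN a j (by simp [a]; omega),
        MBKP_diag u vb hN b j (by simp [b, hj1]),
        MBKP_rowlast_col1 u vb hN c j (by simp [c]) hj1]
      simp only [a, b, c, Fin.val_mk]
      have hB := relB hN u vb
      have hA := relA hN u vb 0 (by omega)
      norm_num at hA
      have e2 : ((1 : ℕ) : ZMod N) + 1 = ((2 : ℕ) : ZMod N) := by push_cast; ring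
      simp only [qBKP]
      rw [show ((0 : ℕ) : ZMod N) = (0 : ZMod N) from by simp] at hB ⊢
      rw [show ((1 : ℕ) : ZMod N) = (1 : ZMod N) from by simp] at hB
      rw [show (0 : ZMod N) + 1 = 1 from by ring]
      norm_num
      linear_combination u 1 * hA + hB
    · -- generic column, (j : ℕ) = k + 2
      obtain ⟨k, hk⟩ : ∃ k, (j : ℕ) = k + 2 := ⟨(j : ℕ) - 2, by omega⟩
      set a : Fin N := ⟨k, by omega⟩
      set b : Fin N := ⟨k + 1, by omega⟩
      have hS : ∑ i : Fin N, yBKP N u vb (i : ℕ) * MBKP N u vb i j =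
          ∑ i ∈ ({a, b, j} : Finset (Fin N)), yBKP N u vb (i : ℕ) * MBKP N u vb i j := by
        refine (Finset.sum_subset (Finset.subset_univ _) ?_).symm
        intro i _ hi
        simp only [Finset.mem_insert, Finset.mem_singleton, not_or, Fin.ext_iff, a, b] at hi
        rw [MBKP_zero_colgen u vb hN i j (by omega) (by omega) (by omega) hi.2.2, mul_zero]
      rw [hS, Finset.sum_insert (by simp [Fin.ext_iff, a, b]; omega),
        Finset.sum_insert (by simp [Fin.ext_iff, b]; omega), Finset.sum_singleton]
      rw [MBKP_sub2 u vb hN a j (by simp [a]; omega),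
        MBKP_sub1 u vb hN b j (by simp [b]; omega),
        MBKP_diag u vb hN j j rfl]
      simp only [a, b, Fin.val_mk, hk]
      have hA0 := relA hN u vb k (by omega)
      have hA1 := relA hN u vb (k + 1) (by omega)
      rw [show k + 1 + 1 = k + 2 from by omega, show k + 1 + 2 = k + 3 from by omega] at hA1
      have c1 : ((k + 1 : ℕ) : ZMod N) + 1 = ((k + 2 : ℕ) : ZMod N) := by push_cast; ring
      have c2 : ((k + 2 : ℕ) : ZMod N) + 1 = ((k + 3 : ℕ) : ZMod N) := by push_cast; ring
      simp only [qBKP]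
      rw [c1, c2]
      linear_combination u ((k + 2 : ℕ) : ZMod N) * hA1 - hA0

/-- Generic case: determinant vanishes when all `p_k` and `v̄_k` are nonzero. -/
lemma det_MBKP_eq_zero_of_ne_zero {N : ℕ} (hN : 3 ≤ N) (u w : ZMod N → ℂ)
    (hp : ∀ k : ZMod N, pBKP u w k ≠ 0) (hw : ∀ k : ZMod N, w k ≠ 0) :
    (MBKP N u w).det = 0 := by
  rw [← Matrix.exists_vecMul_eq_zero_iff]
  refine ⟨fun i => yBKP N u w (i : ℕ), ?_, ?_⟩
  · intro h0
    have h1 := congrFun h0 ⟨0, by omega⟩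
    simp only [Pi.zero_apply, Fin.val_mk] at h1
    unfold yBKP at h1
    rcases mul_eq_zero.mp h1 with h | h
    · exact (Finset.prod_ne_zero_iff.mpr fun j _ => hp _) h
    · exact (Finset.prod_ne_zero_iff.mpr fun j _ => hw _) h
  · funext j
    rw [Matrix.vecMul, dotProduct]
    exact sum_yBKP_mul hN u w j

theorem det_MBKP_eq_zero (N : ℕ) (hN : 3 ≤ N) (u vb : ZMod N → ℂ) :
    (MBKP N u vb).det = 0 := by
  haveI : NeZero N := ⟨by omega⟩
  set F : ℂ → ℂ := fun t => (MBKP N u (fun k => vb k + t)).det with hF_def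
  set S : Set ℂ := {t | ∀ k : ZMod N, u k * (vb k + t) - 1 ≠ 0 ∧ vb k + t ≠ 0} with hS_def
  have hcount : (Sᶜ).Countable := by
    have hsub : Sᶜ ⊆ ⋃ k : ZMod N,
        ({t : ℂ | u k * (vb k + t) - 1 = 0} ∪ {t : ℂ | vb k + t = 0}) := by
      intro t ht
      simp only [hS_def, Set.mem_compl_iff, Set.mem_setOf_eq, not_forall] at ht
      obtain ⟨k, hk⟩ := ht
      rw [not_and_or, not_ne_iff, not_ne_iff] at hk
      refine Set.mem_iUnion.mpr ⟨k, ?_⟩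
      simpa only [Set.mem_union, Set.mem_setOf_eq] using hk
    refine Set.Countable.mono hsub (Set.countable_iUnion fun k => Set.Countable.union ?_ ?_)
    · by_cases hu : u k = 0
      · refine Set.Countable.mono ?_ Set.countable_empty
        intro t ht
        simp [hu] at ht
      · refine Set.Countable.mono ?_ (Set.countable_singleton (1 / u k - vb k))
        intro t ht
        simp only [Set.mem_setOf_eq] at ht
        simp only [Set.mem_singleton_iff]
        field_simp
        linear_combination ht
    · refine Set.Countable.mono ?_ (Set.countable_singleton (-vb k))
      intro t ht
      simp only [Set.mem_setOf_eq] at ht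
      simp only [Set.mem_singleton_iff]
      linear_combination ht
  have hdense : Dense S := by
    have := hcount.dense_compl ℂ
    rwa [compl_compl] at this
  have hcont : Continuous F := by
    apply Continuous.matrix_det
    apply continuous_matrix
    intro i j
    simp only [MBKP, Matrix.of_apply, pBKP, qBKP, VBKP]
    split_ifs <;> fun_prop
  have hzeroS : Set.EqOn F (fun _ => 0) S := by
    intro t ht
    simp only [hS_def, Set.mem_setOf_eq] at ht
    exact det_MBKP_eq_zero_of_ne_zero hN u (fun k => vb k + t)
      (fun k => by simpa [pBKP] using (ht k).1) (fun k => (ht k).2)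
  have : F = fun _ => 0 := Continuous.ext_on hdense hcont continuous_const hzeroS
  have h0 := congrFun this 0
  simpa [hF_def] using h0
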